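/- Let V ⊆ ℂ be an open set invariant under complex conjugation (z ∈ V ⟺ conj(z) ∈ V), and set V⁺ = { z ∈ V : Im z > 0 } and I = V ∩ ℝ. Suppose f : ℂ → ℂ is complex-differentiable on V⁺, continuous on V⁺ ∪ I, and satisfies Im f(x) = 0 for every x ∈ I. Then the function g defined by g(z) = f(z) for z ∈ V with Im z ≥ 0 and g(z) = conj(f(conj z)) for z ∈ V with Im z < 0 is complex-differentiable (holomorphic) on all of V and agrees with f on V⁺ ∪ I. -/

import Mathlib

open Complex Filter Topology Set intervalIntegral

lemma conj_conj_differentiableAt {f : ℂ → ℂ} {z : ℂ}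
    (hf : DifferentiableAt ℂ f ((starRingEnd ℂ) z)) :
    DifferentiableAt ℂ (fun w => (starRingEnd ℂ) (f ((starRingEnd ℂ) w))) z := by
  obtain ⟨d, hd⟩ : ∃ d, HasDerivAt f d ((starRingEnd ℂ) z) := ⟨_, hf.hasDerivAt⟩
  refine (HasDerivAt.differentiableAt (f' := (starRingEnd ℂ) d) ?_)
  rw [hasDerivAt_iff_tendsto_slope] at hd ⊢
  have hconjmap : Tendsto (starRingEnd ℂ) (𝓝[≠] z) (𝓝[≠] ((starRingEnd ℂ) z)) := by
    apply Filter.Tendsto.inf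
    · exact (Complex.continuous_conj.tendsto z)
    · apply tendsto_principal_principal.2
      intro w hw
      simp only [Set.mem_compl_iff, Set.mem_singleton_iff] at *
      exact fun h => hw ((starRingEnd ℂ).injective h)
  have h1 : Tendsto (fun w => slope f ((starRingEnd ℂ) z) ((starRingEnd ℂ) w)) (𝓝[≠] z) (𝓝 d) :=
    hd.comp hconjmap
  have h2 : Tendsto (fun w => (starRingEnd ℂ) (slope f ((starRingEnd ℂ) z) ((starRingEnd ℂ) w)))
      (𝓝[≠] z) (𝓝 ((starRingEnd ℂ) d)) := (Complex.continuous_conj.tendsto d).comp h1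
  refine h2.congr ?_
  intro w
  simp only [slope_def_field]
  rw [map_div₀, map_sub, map_sub]
  simp

lemma diffOn_of_diff_off_real {s : Set ℂ} (hso : IsOpen s) {g : ℂ → ℂ}
    (hc : ContinuousOn g s) (hd : ∀ z ∈ s, z.im ≠ 0 → DifferentiableAt ℂ g z) :
    DifferentiableOn ℂ g s := by
  intro c hcs
  rcases ne_or_eq c.im 0 with him | him
  · exact (hd c hcs him).differentiableWithinAt
  -- `c` is on the real axis
  obtain ⟨ε, hε, hball⟩ := Metric.isOpen_iff.1 hso c hcs
  set r : ℝ := ε / 3 with hr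
  have hrpos : 0 < r := by positivity
  -- the closed square around `c` is in `s`
  have hK : ∀ z : ℂ, |z.re - c.re| ≤ r → |z.im| ≤ r → z ∈ s := by
    intro z h1 h2
    apply hball
    rw [Metric.mem_ball, Complex.dist_eq]
    calc ‖z - c‖ ≤ |(z - c).re| + |(z - c).im| := Complex.norm_le_abs_re_add_abs_im _
      _ ≤ r + r := by
          rw [Complex.sub_re, Complex.sub_im, him, sub_zero]
          exact add_le_add h1 h2
      _ < ε := by rw [hr]; linarith
  -- the open square
  set Q : Set ℂ := {z : ℂ | |z.re - c.re| < r ∧ |z.im| < r} with hQ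
  have hQo : IsOpen Q := by
    have : Q = ((fun z : ℂ => z.re) ⁻¹' Metric.ball c.re r) ∩
        ((fun z : ℂ => z.im) ⁻¹' Metric.ball 0 r) := by
      ext z; simp [hQ, Real.dist_eq, Metric.mem_ball]
    rw [this]
    exact (Metric.isOpen_ball.preimage Complex.continuous_re).inter
      (Metric.isOpen_ball.preimage Complex.continuous_im)
  have hcQ : c ∈ Q := by simp [hQ, hrpos, him]
  have hQK : ∀ z ∈ Q, |z.re - c.re| ≤ r ∧ |z.im| ≤ r := fun z hz => ⟨hz.1.le, hz.2.le⟩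
  -- rectangle vanishing, bottom edge on the real axis
  have rect0 : ∀ a b y : ℝ, |a - c.re| ≤ r → |b - c.re| ≤ r → |y| ≤ r →
      (∫ x in a..b, g x) - (∫ x in a..b, g (x + y * I)) +
        I • (∫ t in (0:ℝ)..y, g (b + t * I)) - I • ∫ t in (0:ℝ)..y, g (a + t * I) = 0 := by
    intro a b y ha hb hy
    have h := Complex.integral_boundary_rect_eq_zero_of_differentiable_on_off_countable g
      (a : ℂ) ((b : ℝ) + y * I) ∅ Set.countable_empty ?_ ?_
    · simpa using h
    · apply hc.mono
      intro z hz
      rw [Complex.mem_reProdIm] at hz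
      simp only [Complex.ofReal_re, Complex.add_re, Complex.mul_re, Complex.I_re,
        Complex.ofReal_im, Complex.add_im, Complex.mul_im, Complex.I_im] at hz
      have hz1 : z.re ∈ Set.uIcc a b := by simpa using hz.1
      have hz2 : z.im ∈ Set.uIcc 0 y := by simpa using hz.2
      apply hK
      · rw [Set.mem_uIcc] at hz1
        rw [abs_le] at ha hb ⊢
        rcases hz1 with ⟨h1, h2⟩ | ⟨h1, h2⟩ <;> constructor <;> linarith
      · rw [Set.mem_uIcc] at hz2
        rw [abs_le] at hy ⊢
        rcases hz2 with ⟨h1, h2⟩ | ⟨h1, h2⟩ <;> constructor <;> linarith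
    · rintro z ⟨hz, -⟩
      rw [Complex.mem_reProdIm] at hz
      simp only [Complex.ofReal_re, Complex.add_re, Complex.mul_re, Complex.I_re,
        Complex.ofReal_im, Complex.add_im, Complex.mul_im, Complex.I_im, mul_zero, mul_one,
        sub_zero, zero_add, add_zero, zero_mul] at hz
      obtain ⟨hz1, hz2⟩ := hz
      have hzim : z.im ≠ 0 := by
        intro h0
        rw [h0] at hz2
        rcases hz2 with ⟨hlt, hgt⟩
        rcases le_or_gt y 0 with hy0 | hy0
        · rw [max_eq_left hy0] at hgt; exact absurd hgt (lt_irrefl 0)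
        · rw [min_eq_left hy0.le] at hlt; exact absurd hlt (lt_irrefl 0)
      refine hd z ?_ hzim
      rw [abs_le] at ha hb hy
      apply hK
      · rw [abs_le]
        rcases hz1 with ⟨h1, h2⟩
        rcases le_total a b with hab | hab
        · rw [min_eq_left hab] at h1; rw [max_eq_right hab] at h2
          constructor <;> linarith
        · rw [min_eq_right hab] at h1; rw [max_eq_left hab] at h2
          constructor <;> linarith
      · rw [abs_le]
        rcases hz2 with ⟨h1, h2⟩
        rcases le_total (0:ℝ) y with hy0 | hy0
        · rw [min_eq_left hy0] at h1; rw [max_eq_right hy0] at h2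
          constructor <;> linarith
        · rw [min_eq_right hy0] at h1; rw [max_eq_left hy0] at h2
          constructor <;> linarith
  -- integrability of horizontal and vertical slices
  have hH : ∀ (y a b : ℝ), |y| ≤ r → |a - c.re| ≤ r → |b - c.re| ≤ r →
      IntervalIntegrable (fun x : ℝ => g (x + y * I)) MeasureTheory.volume a b := by
    intro y a b hy ha hb
    apply ContinuousOn.intervalIntegrable
    apply hc.comp (Continuous.continuousOn
      (Complex.continuous_ofReal.add continuous_const))
    intro x hx
    apply hK <;> simp only [Pi.add_apply, Pi.mul_apply, Complex.add_re, Complex.ofReal_re, Complex.mul_re, Complex.I_re,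
      Complex.mul_im, Complex.I_im, Complex.ofReal_im, Complex.add_im, mul_zero, mul_one,
      sub_zero, zero_add, add_zero, zero_mul]
    · rw [Set.mem_uIcc] at hx
      rw [abs_le] at ha hb ⊢
      rcases hx with ⟨h1, h2⟩ | ⟨h1, h2⟩ <;> constructor <;> linarith
    · exact hy
  have hVt : ∀ (b y₀ y₁ : ℝ), |b - c.re| ≤ r → |y₀| ≤ r → |y₁| ≤ r →
      IntervalIntegrable (fun t : ℝ => g (b + t * I)) MeasureTheory.volume y₀ y₁ := by
    intro b y₀ y₁ hb hy0 hy1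
    apply ContinuousOn.intervalIntegrable
    apply hc.comp (Continuous.continuousOn
      (continuous_const.add (Complex.continuous_ofReal.mul continuous_const)))
    intro t ht
    apply hK <;> simp only [Pi.add_apply, Pi.mul_apply, Complex.add_re, Complex.ofReal_re, Complex.mul_re, Complex.I_re,
      Complex.mul_im, Complex.I_im, Complex.ofReal_im, Complex.add_im, mul_zero, mul_one,
      sub_zero, zero_add, add_zero, zero_mul]
    · exact hb
    · rw [Set.mem_uIcc] at ht
      rw [abs_le] at hy0 hy1 ⊢
      rcases ht with ⟨h1, h2⟩ | ⟨h1, h2⟩ <;> constructor <;> linarith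
  -- the primitive
  set G : ℂ → ℂ := fun w =>
    (∫ x in c.re..w.re, g x) + I * ∫ t in (0:ℝ)..w.im, g (w.re + t * I) with hGdef
  -- key identity
  have key : ∀ w ∈ Q, ∀ w' ∈ Q, G w' - G w =
      (∫ x in w.re..w'.re, g (x + w.im * I)) + I * ∫ t in w.im..w'.im, g (w'.re + t * I) := by
    intro w hw w' hw'
    obtain ⟨hw1, hw2⟩ := hQK w hw
    obtain ⟨hw1', hw2'⟩ := hQK w' hw'
    have hc0 : |c.re - c.re| ≤ r := by simp [hrpos.le]
    have hrect := rect0 w.re w'.re w.im hw1 hw1' hw2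
    have hhoriz : (∫ x in c.re..w'.re, g ((x:ℝ):ℂ)) - ∫ x in c.re..w.re, g ((x:ℝ):ℂ) =
        ∫ x in w.re..w'.re, g ((x:ℝ):ℂ) := by
      apply intervalIntegral.integral_interval_sub_left
      · have := hH 0 c.re w'.re (by simp [hrpos.le]) hc0 hw1'
        simpa using this
      · have := hH 0 c.re w.re (by simp [hrpos.le]) hc0 hw1
        simpa using this
    have hvert : (∫ t in (0:ℝ)..w'.im, g (w'.re + t * I)) -
        ∫ t in (0:ℝ)..w.im, g (w'.re + t * I) = ∫ t in w.im..w'.im, g (w'.re + t * I) := by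
      apply intervalIntegral.integral_interval_sub_left
      · exact hVt w'.re 0 w'.im hw1' (by simp [hrpos.le]) hw2'
      · exact hVt w'.re 0 w.im hw1' (by simp [hrpos.le]) hw2
    rw [smul_eq_mul, smul_eq_mul] at hrect
    rw [hGdef]
    simp only []
    rw [← hvert]
    have : (∫ x in c.re..w'.re, g ((x:ℝ):ℂ)) - ∫ x in c.re..w.re, g ((x:ℝ):ℂ) =
        (∫ x in w.re..w'.re, g (x + w.im * I)) - I * (∫ t in (0:ℝ)..w.im, g (w'.re + t * I)) +
          I * ∫ t in (0:ℝ)..w.im, g (w.re + t * I) := by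
      rw [hhoriz]; linear_combination hrect
    linear_combination this
  -- the primitive has derivative g on Q
  have hG : ∀ w ∈ Q, HasDerivAt G (g w) w := by
    intro w hw
    rw [hasDerivAt_iff_isLittleO, Asymptotics.isLittleO_iff]
    intro e he
    have hgat : ContinuousAt g w :=
      hc.continuousAt (hso.mem_nhds (hK w (hQK w hw).1 (hQK w hw).2))
    obtain ⟨δ₁, hδ₁pos, hδ₁⟩ := Metric.continuousAt_iff.1 hgat (e/2) (by positivity)
    obtain ⟨δ₂, hδ₂pos, hδ₂⟩ := Metric.isOpen_iff.1 hQo w hw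
    rw [Metric.eventually_nhds_iff]
    refine ⟨min (δ₁/2) δ₂, by positivity, ?_⟩
    intro w' hdist
    have hw'Q : w' ∈ Q := hδ₂ (Metric.mem_ball.2 (lt_of_lt_of_le hdist (min_le_right _ _)))
    have hdist1 : dist w' w < δ₁ / 2 := lt_of_lt_of_le hdist (min_le_left _ _)
    have hnd : ‖w' - w‖ < δ₁ / 2 := by rwa [← dist_eq_norm]
    have hkey := key w hw w' hw'Q
    set A := ∫ x in w.re..w'.re, g (x + w.im * I) with hA
    set B := ∫ t in w.im..w'.im, g (w'.re + t * I) with hB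
    have hrebd : |w'.re - w.re| ≤ ‖w' - w‖ := by
      rw [← Complex.sub_re]
      exact Complex.abs_re_le_norm _
    have himbd : |w'.im - w.im| ≤ ‖w' - w‖ := by
      rw [← Complex.sub_im]
      exact Complex.abs_im_le_norm _
    -- estimate for the horizontal part
    have hAbd : ‖A - ((w'.re - w.re : ℝ) : ℂ) * g w‖ ≤ e / 2 * ‖w' - w‖ := by
      have hInt : IntervalIntegrable (fun x : ℝ => g (x + w.im * I)) MeasureTheory.volume
          w.re w'.re := hH w.im w.re w'.re (hQK w hw).2 (hQK w hw).1 (hQK w' hw'Q).1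
      have : A - ((w'.re - w.re : ℝ) : ℂ) * g w
          = ∫ x in w.re..w'.re, (g (x + w.im * I) - g w) := by
        rw [intervalIntegral.integral_sub hInt intervalIntegrable_const,
          intervalIntegral.integral_const, Complex.real_smul]
      rw [this]
      have h1 : ‖∫ x in w.re..w'.re, (g (x + w.im * I) - g w)‖ ≤ e/2 * |w'.re - w.re| := by
        apply intervalIntegral.norm_integral_le_of_norm_le_const
        intro x hx
        have hx' : x ∈ Set.uIcc w.re w'.re := Set.Ioc_subset_Icc_self hx
        have hdx : dist (↑x + ↑w.im * I) w < δ₁ := by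
          rw [Complex.dist_eq]
          have hre : ((x:ℂ) + ↑w.im * I - w).re = x - w.re := by simp
          have him' : ((x:ℂ) + ↑w.im * I - w).im = 0 := by simp
          calc ‖(x:ℂ) + ↑w.im * I - w‖
              ≤ |((x:ℂ) + ↑w.im * I - w).re| + |((x:ℂ) + ↑w.im * I - w).im| :=
                Complex.norm_le_abs_re_add_abs_im _
            _ = |x - w.re| := by rw [hre, him']; simp
            _ ≤ |w'.re - w.re| := abs_sub_left_of_mem_uIcc hx'
            _ ≤ ‖w' - w‖ := hrebd
            _ < δ₁ := by linarith
        have := hδ₁ hdx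
        rw [dist_eq_norm] at this
        exact this.le
      calc ‖∫ x in w.re..w'.re, (g (x + w.im * I) - g w)‖ ≤ e/2 * |w'.re - w.re| := h1
        _ ≤ e/2 * ‖w' - w‖ := by
            apply mul_le_mul_of_nonneg_left hrebd (by positivity)
    -- estimate for the vertical part
    have hBbd : ‖B - ((w'.im - w.im : ℝ) : ℂ) * g w‖ ≤ e / 2 * ‖w' - w‖ := by
      have hInt : IntervalIntegrable (fun t : ℝ => g (w'.re + t * I)) MeasureTheory.volume
          w.im w'.im := hVt w'.re w.im w'.im (hQK w' hw'Q).1 (hQK w hw).2 (hQK w' hw'Q).2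
      have : B - ((w'.im - w.im : ℝ) : ℂ) * g w
          = ∫ t in w.im..w'.im, (g (w'.re + t * I) - g w) := by
        rw [intervalIntegral.integral_sub hInt intervalIntegrable_const,
          intervalIntegral.integral_const, Complex.real_smul]
      rw [this]
      have h1 : ‖∫ t in w.im..w'.im, (g (w'.re + t * I) - g w)‖ ≤ e/2 * |w'.im - w.im| := by
        apply intervalIntegral.norm_integral_le_of_norm_le_const
        intro t ht
        have ht' : t ∈ Set.uIcc w.im w'.im := Set.Ioc_subset_Icc_self ht
        have hdx : dist (↑w'.re + ↑t * I) w < δ₁ := by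
          rw [Complex.dist_eq]
          have hre : ((w'.re:ℂ) + ↑t * I - w).re = w'.re - w.re := by simp
          have him' : ((w'.re:ℂ) + ↑t * I - w).im = t - w.im := by simp
          calc ‖(w'.re:ℂ) + ↑t * I - w‖
              ≤ |((w'.re:ℂ) + ↑t * I - w).re| + |((w'.re:ℂ) + ↑t * I - w).im| :=
                Complex.norm_le_abs_re_add_abs_im _
            _ = |w'.re - w.re| + |t - w.im| := by rw [hre, him']
            _ ≤ ‖w' - w‖ + |w'.im - w.im| :=
                add_le_add hrebd (abs_sub_left_of_mem_uIcc ht')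
            _ ≤ ‖w' - w‖ + ‖w' - w‖ := add_le_add le_rfl himbd
            _ < δ₁ := by linarith
        have := hδ₁ hdx
        rw [dist_eq_norm] at this
        exact this.le
      calc ‖∫ t in w.im..w'.im, (g (w'.re + t * I) - g w)‖ ≤ e/2 * |w'.im - w.im| := h1
        _ ≤ e/2 * ‖w' - w‖ := by
            apply mul_le_mul_of_nonneg_left himbd (by positivity)
    -- combine
    have hw'w : w' - w = ((w'.re - w.re : ℝ) : ℂ) + ((w'.im - w.im : ℝ) : ℂ) * I := by
      rw [← Complex.re_add_im (w' - w)]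
      push_cast
      simp [Complex.sub_re, Complex.sub_im]
    have hsplit : G w' - G w - (w' - w) • g w =
        (A - ((w'.re - w.re : ℝ) : ℂ) * g w) + I * (B - ((w'.im - w.im : ℝ) : ℂ) * g w) := by
      rw [smul_eq_mul, hkey]
      linear_combination (- g w) * hw'w
    rw [hsplit]
    calc ‖(A - ((w'.re - w.re : ℝ) : ℂ) * g w) + I * (B - ((w'.im - w.im : ℝ) : ℂ) * g w)‖
        ≤ ‖A - ((w'.re - w.re : ℝ) : ℂ) * g w‖ + ‖I * (B - ((w'.im - w.im : ℝ) : ℂ) * g w)‖ :=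
          norm_add_le _ _
      _ = ‖A - ((w'.re - w.re : ℝ) : ℂ) * g w‖ + ‖B - ((w'.im - w.im : ℝ) : ℂ) * g w‖ := by
          rw [norm_mul, Complex.norm_I, one_mul]
      _ ≤ e/2 * ‖w' - w‖ + e/2 * ‖w' - w‖ := add_le_add hAbd hBbd
      _ = e * ‖w' - w‖ := by ring
  -- conclude
  have hGd : DifferentiableOn ℂ G Q := fun w hw =>
    ((hG w hw).differentiableAt).differentiableWithinAt
  have hGan : AnalyticOnNhd ℂ G Q := hGd.analyticOnNhd hQo
  have hder : DifferentiableAt ℂ (deriv G) c := ((hGan.deriv) c hcQ).differentiableAt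
  have heq : (fun u => deriv G u) =ᶠ[𝓝 c] g := by
    filter_upwards [hQo.mem_nhds hcQ] with u hu
    exact (hG u hu).deriv
  exact (hder.congr_of_eventuallyEq heq.symm).differentiableWithinAt

/-- Schwarz reflection, real boundary values: let `V ⊆ ℂ` be open and
invariant under conjugation, `V⁺ = {z ∈ V | Im z > 0}` and `I = V ∩ ℝ`. If `f` is
holomorphic on `V⁺`, continuous on `V⁺ ∪ I`, and `Im f = 0` on `I`, then the function
`g` equal to `f` on the closed upper part of `V` and to `conj (f (conj z))` on the lower
part is holomorphic on all of `V` and agrees with `f` on `V⁺ ∪ I`. -/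
theorem schwarz_reflection_real (V : Set ℂ) (hV : IsOpen V)
    (hVconj : ∀ z : ℂ, z ∈ V ↔ (starRingEnd ℂ) z ∈ V)
    (f : ℂ → ℂ)
    (hf : DifferentiableOn ℂ f {z ∈ V | 0 < z.im})
    (hfc : ContinuousOn f ({z ∈ V | 0 < z.im} ∪ {z ∈ V | z.im = 0}))
    (hfre : ∀ z ∈ {z ∈ V | z.im = 0}, (f z).im = 0) :
    DifferentiableOn ℂ
        (fun z => if 0 ≤ z.im then f z else (starRingEnd ℂ) (f ((starRingEnd ℂ) z))) V ∧
      ∀ z ∈ ({z ∈ V | 0 < z.im} ∪ {z ∈ V | z.im = 0}),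
        (fun z => if 0 ≤ z.im then f z else (starRingEnd ℂ) (f ((starRingEnd ℂ) z))) z
          = f z := by
  set g : ℂ → ℂ := fun z => if 0 ≤ z.im then f z else (starRingEnd ℂ) (f ((starRingEnd ℂ) z))
    with hgdef
  have hU : IsOpen {z ∈ V | 0 < z.im} := by
    have : {z ∈ V | 0 < z.im} = V ∩ Complex.im ⁻¹' Set.Ioi 0 := rfl
    rw [this]
    exact hV.inter (isOpen_Ioi.preimage Complex.continuous_im)
  have fdiffat : ∀ z, z ∈ V → 0 < z.im → DifferentiableAt ℂ f z := fun z hz h =>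
    hf.differentiableAt (hU.mem_nhds ⟨hz, h⟩)
  have hagree : ∀ z ∈ ({z ∈ V | 0 < z.im} ∪ {z ∈ V | z.im = 0}), g z = f z := by
    rintro z (⟨-, hz⟩ | ⟨-, hz⟩)
    · exact if_pos hz.le
    · exact if_pos hz.ge
  -- eventual equalities
  have hev_pos : ∀ z : ℂ, 0 < z.im → g =ᶠ[𝓝 z] f := by
    intro z hz
    have hev : ∀ᶠ w : ℂ in 𝓝 z, 0 < w.im :=
      (Complex.continuous_im.continuousAt (x := z)).eventually_const_lt hz
    filter_upwards [hev] with w hw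
    exact if_pos hw.le
  have hev_neg : ∀ z : ℂ, z.im < 0 →
      g =ᶠ[𝓝 z] fun w => (starRingEnd ℂ) (f ((starRingEnd ℂ) w)) := by
    intro z hz
    have hev : ∀ᶠ w : ℂ in 𝓝 z, w.im < 0 :=
      (Complex.continuous_im.continuousAt (x := z)).eventually_lt_const hz
    filter_upwards [hev] with w hw
    exact if_neg (not_le.2 hw)
  -- continuity of g on V
  have hgca : ∀ z ∈ V, ContinuousAt g z := by
    intro z hz
    rcases lt_trichotomy z.im 0 with hlt | heq | hgt
    · have h1 : ContinuousAt (fun w => (starRingEnd ℂ) (f ((starRingEnd ℂ) w))) z := by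
        have hzc : (starRingEnd ℂ) z ∈ V := (hVconj z).1 hz
        have hzim : 0 < ((starRingEnd ℂ) z).im := by
          rw [Complex.conj_im]; linarith
        exact Complex.continuous_conj.continuousAt.comp
          (((fdiffat _ hzc hzim).continuousAt).comp Complex.continuous_conj.continuousAt)
      exact h1.congr (hev_neg z hlt).symm
    · -- on the real axis
      have hfz : (starRingEnd ℂ) (f z) = f z := Complex.conj_eq_iff_im.2 (hfre z ⟨hz, heq⟩)
      have hzz : (starRingEnd ℂ) z = z := Complex.conj_eq_iff_im.2 heq
      set h : ℂ → ℂ := fun w => if 0 ≤ w.im then w else (starRingEnd ℂ) w with hhdef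
      have hnormid : ∀ w, ‖g w - f z‖ = ‖f (h w) - f z‖ := by
        intro w
        by_cases hw : 0 ≤ w.im
        · simp only [hgdef, hhdef, if_pos hw]
        · simp only [hgdef, hhdef, if_neg hw]
          rw [show (starRingEnd ℂ) (f ((starRingEnd ℂ) w)) - f z
              = (starRingEnd ℂ) (f ((starRingEnd ℂ) w) - f z) by rw [map_sub, hfz],
            Complex.norm_conj]
      have hhten : Tendsto h (𝓝 z) (𝓝 z) := by
        rw [tendsto_iff_norm_sub_tendsto_zero]
        have : (fun w => ‖h w - z‖) = fun w => ‖w - z‖ := by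
          funext w
          by_cases hw : 0 ≤ w.im
          · simp only [hhdef, if_pos hw]
          · simp only [hhdef, if_neg hw]
            rw [show (starRingEnd ℂ) w - z = (starRingEnd ℂ) (w - z) by rw [map_sub, hzz],
              Complex.norm_conj]
        rw [this, ← tendsto_iff_norm_sub_tendsto_zero]
        exact tendsto_id
      have hhmem : ∀ᶠ w in 𝓝 z, h w ∈ ({w ∈ V | 0 < w.im} ∪ {w ∈ V | w.im = 0}) := by
        filter_upwards [hV.mem_nhds hz] with w hw
        have hmemV : h w ∈ V := by
          by_cases hw0 : 0 ≤ w.im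
          · simpa only [hhdef, if_pos hw0] using hw
          · simp only [hhdef, if_neg hw0]
            exact (hVconj w).1 hw
        have him0 : 0 ≤ (h w).im := by
          by_cases hw0 : 0 ≤ w.im
          · simpa only [hhdef, if_pos hw0] using hw0
          · simp only [hhdef, if_neg hw0, Complex.conj_im]
            linarith [not_le.1 hw0]
        rcases him0.lt_or_eq with h1 | h1
        · exact Or.inl ⟨hmemV, h1⟩
        · exact Or.inr ⟨hmemV, h1.symm⟩
      have hhten' : Tendsto h (𝓝 z) (𝓝[({w ∈ V | 0 < w.im} ∪ {w ∈ V | w.im = 0})] z) :=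
        tendsto_nhdsWithin_iff.2 ⟨hhten, hhmem⟩
      have hcomp : Tendsto (fun w => f (h w)) (𝓝 z) (𝓝 (f z)) :=
        Filter.Tendsto.comp (hfc z (Or.inr ⟨hz, heq⟩)) hhten'
      have h1 : Tendsto (fun w => ‖f (h w) - f z‖) (𝓝 z) (𝓝 0) :=
        tendsto_iff_norm_sub_tendsto_zero.1 hcomp
      have hgz : g z = f z := if_pos heq.ge
      rw [ContinuousAt, hgz, tendsto_iff_norm_sub_tendsto_zero]
      have h2 : (fun w => ‖g w - f z‖) = fun w => ‖f (h w) - f z‖ := funext hnormid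
      rw [h2]
      exact h1
    · exact ((fdiffat z hz hgt).continuousAt).congr (hev_pos z hgt).symm
  -- differentiability off the real axis
  have hgd : ∀ z ∈ V, z.im ≠ 0 → DifferentiableAt ℂ g z := by
    intro z hz hne
    rcases hne.lt_or_gt with hlt | hgt
    · have hzc : (starRingEnd ℂ) z ∈ V := (hVconj z).1 hz
      have hzim : 0 < ((starRingEnd ℂ) z).im := by rw [Complex.conj_im]; linarith
      exact (conj_conj_differentiableAt (fdiffat _ hzc hzim)).congr_of_eventuallyEq
        (hev_neg z hlt)
    · exact (fdiffat z hz hgt).congr_of_eventuallyEq (hev_pos z hgt)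
  exact ⟨diffOn_of_diff_off_real hV (fun z hz => (hgca z hz).continuousWithinAt) hgd, hagree⟩
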